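/- For the Curie-Weiss free energy F_N(t,h) = (1/N) log Σ_{σ∈{±1}^N} 2^{-N} exp((t/N) Σ_{i,j} σ_i σ_j + h Σ_i σ_i), the identity ∂_t F_N - (∂_h F_N)^2 = (1/N) ∂_h^2 F_N holds for all t ≥ 0 and h ∈ ℝ. -/

import Mathlib

open Finset

/-- Spin value of a Boolean configuration entry: `±1`. -/
noncomputable def spin (b : Bool) : ℝ := if b then 1 else -1

/-- Curie-Weiss free energy
`F_N(t,h) = (1/N) log Σ_{σ∈{±1}^N} 2^{-N} exp((t/N) Σ_{i,j} σ_i σ_j + h Σ_i σ_i)`. -/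
noncomputable def cwF (N : ℕ) (t h : ℝ) : ℝ :=
  (1 / N) * Real.log (∑ σ : Fin N → Bool,
    (2 : ℝ) ^ (-(N : ℤ)) *
      Real.exp ((t / N) * ∑ i, ∑ j, spin (σ i) * spin (σ j) + h * ∑ i, spin (σ i)))

namespace CW

/-- Magnetization. -/
noncomputable def A (N : ℕ) (σ : Fin N → Bool) : ℝ := ∑ i, spin (σ i)

noncomputable def term (N : ℕ) (t h : ℝ) (σ : Fin N → Bool) : ℝ :=
  (2 : ℝ) ^ (-(N : ℤ)) * Real.exp ((t / N) * (A N σ * A N σ) + h * A N σ)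

noncomputable def Z (N : ℕ) (t h : ℝ) : ℝ := ∑ σ : Fin N → Bool, term N t h σ
noncomputable def Z1 (N : ℕ) (t h : ℝ) : ℝ := ∑ σ : Fin N → Bool, A N σ * term N t h σ
noncomputable def Z2 (N : ℕ) (t h : ℝ) : ℝ :=
  ∑ σ : Fin N → Bool, A N σ * (A N σ * term N t h σ)

lemma term_pos (N : ℕ) (t h : ℝ) (σ : Fin N → Bool) : 0 < term N t h σ := by
  unfold term; positivity

lemma Z_pos (N : ℕ) (t h : ℝ) : 0 < Z N t h :=
  Finset.sum_pos (fun σ _ => term_pos N t h σ) Finset.univ_nonempty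

lemma cwF_eq (N : ℕ) (t h : ℝ) : cwF N t h = (1 / N) * Real.log (Z N t h) := by
  unfold cwF Z term A
  congr 2
  refine Finset.sum_congr rfl fun σ _ => ?_
  rw [← Finset.sum_mul_sum]

lemma hasDerivAt_term_h (N : ℕ) (t h : ℝ) (σ : Fin N → Bool) :
    HasDerivAt (fun h' => term N t h' σ) (A N σ * term N t h σ) h := by
  have h1 : HasDerivAt (fun h' : ℝ => (t / N) * (A N σ * A N σ) + h' * A N σ) (A N σ) h := by
    simpa using ((hasDerivAt_id h).mul_const (A N σ)).const_add ((t / N) * (A N σ * A N σ))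
  have h2 := h1.exp.const_mul ((2 : ℝ) ^ (-(N : ℤ)))
  refine h2.congr_deriv ?_
  unfold term; ring

lemma hasDerivAt_term_t (N : ℕ) (t h : ℝ) (σ : Fin N → Bool) :
    HasDerivAt (fun t' => term N t' h σ) ((A N σ * A N σ) / N * term N t h σ) t := by
  have h1 : HasDerivAt (fun t' : ℝ => (t' / N) * (A N σ * A N σ) + h * A N σ)
      ((A N σ * A N σ) / N) t := by
    have h0 := (((hasDerivAt_id t).div_const (N : ℝ)).mul_const (A N σ * A N σ)).add_const
      (h * A N σ)
    refine h0.congr_deriv ?_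
    ring
  have h2 := h1.exp.const_mul ((2 : ℝ) ^ (-(N : ℤ)))
  refine h2.congr_deriv ?_
  unfold term; ring

lemma hasDerivAt_Z_h (N : ℕ) (t h : ℝ) :
    HasDerivAt (fun h' => Z N t h') (Z1 N t h) h :=
  HasDerivAt.fun_sum fun σ _ => hasDerivAt_term_h N t h σ

lemma hasDerivAt_Z1_h (N : ℕ) (t h : ℝ) :
    HasDerivAt (fun h' => Z1 N t h') (Z2 N t h) h :=
  HasDerivAt.fun_sum fun σ _ => (hasDerivAt_term_h N t h σ).const_mul (A N σ)

lemma hasDerivAt_Z_t (N : ℕ) (t h : ℝ) :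
    HasDerivAt (fun t' => Z N t' h) ((1 / N) * Z2 N t h) t := by
  have h0 := HasDerivAt.fun_sum fun σ (_ : σ ∈ Finset.univ) => hasDerivAt_term_t N t h σ
  refine h0.congr_deriv ?_
  unfold Z2
  rw [Finset.mul_sum]
  exact Finset.sum_congr rfl fun σ _ => by ring

lemma deriv_cwF_h (N : ℕ) (t h : ℝ) :
    deriv (fun h' => cwF N t h') h = (1 / N) * (Z1 N t h / Z N t h) := by
  have hfun : (fun h' => cwF N t h') = fun h' => (1 / N : ℝ) * Real.log (Z N t h') :=
    funext fun h' => cwF_eq N t h'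
  rw [hfun]
  exact (((hasDerivAt_Z_h N t h).log (Z_pos N t h).ne').const_mul ((1 : ℝ) / N)).deriv

lemma deriv_cwF_t (N : ℕ) (t h : ℝ) :
    deriv (fun t' => cwF N t' h) t = (1 / N) * ((1 / N) * Z2 N t h / Z N t h) := by
  have hfun : (fun t' => cwF N t' h) = fun t' => (1 / N : ℝ) * Real.log (Z N t' h) :=
    funext fun t' => cwF_eq N t' h
  rw [hfun]
  exact (((hasDerivAt_Z_t N t h).log (Z_pos N t h).ne').const_mul ((1 : ℝ) / N)).deriv

end CW

/-- The Curie-Weiss free energy satisfies the exact Hamilton-Jacobi equation with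
viscosity parameter `1/N`: `∂_t F_N - (∂_h F_N)^2 = (1/N) ∂_h^2 F_N` for all `t ≥ 0, h ∈ ℝ`. -/
theorem curieWeiss_hamilton_jacobi (N : ℕ) (hN : 1 ≤ N) (t h : ℝ) (ht : 0 ≤ t) :
    deriv (fun t' => cwF N t' h) t - (deriv (fun h' => cwF N t h') h) ^ 2
      = (1 / N) * deriv (fun h' => deriv (fun h'' => cwF N t h'') h') h := by
  have hN0 : (N : ℝ) ≠ 0 := Nat.cast_ne_zero.mpr (by omega)
  have hZ := CW.Z_pos N t h
  have hfun : (fun h' => deriv (fun h'' => cwF N t h'') h')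
      = fun h' => (1 / N : ℝ) * (CW.Z1 N t h' / CW.Z N t h') :=
    funext fun h' => CW.deriv_cwF_h N t h'
  have hdd : deriv (fun h' => deriv (fun h'' => cwF N t h'') h') h
      = (1 / N) * ((CW.Z2 N t h * CW.Z N t h - CW.Z1 N t h * CW.Z1 N t h)
          / CW.Z N t h ^ 2) := by
    rw [hfun]
    exact (((CW.hasDerivAt_Z1_h N t h).div (CW.hasDerivAt_Z_h N t h) hZ.ne').const_mul
      ((1 : ℝ) / N)).deriv
  rw [CW.deriv_cwF_t, CW.deriv_cwF_h, hdd]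
  field_simp
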